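/- Let t be a Mockingbird term and let s, s' be terms with t ≼ s, t ≼ s', and s ≠ s'. Then s ⇒ s' if and only if fr(s) ⋖ fr(s'). -/
import Mathlib


/-- Mockingbird terms: the constant `M`, variables `x i`, and applications. -/
inductive MTerm : Type
  | M : MTerm
  | var : ℕ → MTerm
  | app : MTerm → MTerm → MTerm
  deriving DecidableEq

/-- The one-step rewrite relation `⇒` on Mockingbird terms. -/
inductive Step : MTerm → MTerm → Prop
  | mock (t : MTerm) : Step (MTerm.app MTerm.M t) (MTerm.app t t)
  | left {t1 t1' : MTerm} (t2 : MTerm) :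
      Step t1 t1' → Step (MTerm.app t1 t2) (MTerm.app t1' t2)
  | right (t1 : MTerm) {t2 t2' : MTerm} :
      Step t2 t2' → Step (MTerm.app t1 t2) (MTerm.app t1 t2')

/-- `≼`, the reflexive-transitive closure of `⇒`. -/
def MLe : MTerm → MTerm → Prop := Relation.ReflTransGen Step

/-- `≡`, the reflexive-symmetric-transitive closure of `⇒`. -/
def MEquiv : MTerm → MTerm → Prop := Relation.EqvGen Step

/-- Strict version of `≼`. -/
def MLt (s t : MTerm) : Prop := MLe s t ∧ s ≠ t

/-- Covering relation for `≼`. -/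
def MCovBy (s t : MTerm) : Prop := MLt s t ∧ ∀ z, MLt s z → ¬ MLt z t

/-- Duplicative trees: white or black nodes with a list (forest) of children. -/
inductive DTree : Type
  | W : List DTree → DTree
  | B : List DTree → DTree

/-- The one-step relation `⋖` on duplicative forests. -/
inductive DStep : List DTree → List DTree → Prop
  | dup (g : List DTree) : DStep [DTree.W g] [DTree.B (g ++ g)]
  | white {g g' : List DTree} : DStep g g' → DStep [DTree.W g] [DTree.W g']
  | black {g g' : List DTree} : DStep g g' → DStep [DTree.B g] [DTree.B g']
  | head {t t' : DTree} (f : List DTree) : DStep [t] [t'] → DStep (t :: f) (t' :: f)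
  | tail (t : DTree) {f f' : List DTree} : DStep f f' → DStep (t :: f) (t :: f')

/-- `≪`, the reflexive-transitive closure of `⋖`. -/
def DLe : List DTree → List DTree → Prop := Relation.ReflTransGen DStep

/-- The map `fr` from Mockingbird terms to duplicative forests. -/
def fr : MTerm → List DTree
  | MTerm.M => []
  | MTerm.var _ => []
  | MTerm.app MTerm.M MTerm.M => [DTree.B []]
  | MTerm.app MTerm.M t' => [DTree.W (fr t')]
  | MTerm.app t t' => [DTree.B (fr t ++ fr t')]

mutual
  /-- The pruning map on duplicative trees (returns a forest). -/
  def prT : DTree → List DTree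
    | DTree.W g => [DTree.W (prF g)]
    | DTree.B g => prF g
  /-- The pruning map on duplicative forests. -/
  def prF : List DTree → List DTree
    | [] => []
    | t :: f => prT t ++ prF f
end

mutual
  /-- The statistic `mtStat` on duplicative trees. -/
  def mtStat : DTree → ℕ
    | DTree.W g => 2 * ml g
    | DTree.B g => ml g
  /-- Sum of `mtStat` over the trees of a forest. -/
  def mtsum : List DTree → ℕ
    | [] => 0
    | t :: f => mtStat t + mtsum f
  /-- The statistic `ml` on duplicative forests: `1 - ℓ + Σ mtStat`. -/
  def ml : List DTree → ℕ
    | f => mtsum f + 1 - f.length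
end

mutual
  /-- Number of white nodes in a duplicative tree. -/
  def whitesT : DTree → ℕ
    | DTree.W g => 1 + whitesF g
    | DTree.B g => whitesF g
  /-- Number of white nodes in a duplicative forest. -/
  def whitesF : List DTree → ℕ
    | [] => 0
    | t :: f => whitesT t + whitesF f
end

/-- Closed terms: no variables. -/
def MClosed : MTerm → Prop
  | MTerm.M => True
  | MTerm.var _ => False
  | MTerm.app a b => MClosed a ∧ MClosed b

/-- Degree: number of applications. -/
def deg : MTerm → ℕ
  | MTerm.M => 0
  | MTerm.var _ => 0
  | MTerm.app a b => deg a + deg b + 1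

/-- Subterm relation. -/
inductive Subterm : MTerm → MTerm → Prop
  | refl (t : MTerm) : Subterm t t
  | left {s a : MTerm} (b : MTerm) : Subterm s a → Subterm s (MTerm.app a b)
  | right (a : MTerm) {s b : MTerm} : Subterm s b → Subterm s (MTerm.app a b)

/-- The term `r_d`. -/
def rTerm : ℕ → MTerm
  | 0 => MTerm.M
  | d + 1 => MTerm.app MTerm.M (rTerm d)

/-- Saturated chain from `a` to `b`, given as the list of its elements. -/
def SatChain (a b : MTerm) (c : List MTerm) : Prop :=
  List.Chain' MCovBy c ∧ c.head? = some a ∧ c.getLast? = some b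
/-! ### Auxiliary lemmas -/

lemma step_src' {u v : MTerm} (h : Step u v) : ∃ x y, u = MTerm.app x y := by
  cases h <;> exact ⟨_, _, rfl⟩

lemma step_tgt' {u v : MTerm} (h : Step u v) : ∃ x y, v = MTerm.app x y := by
  cases h <;> exact ⟨_, _, rfl⟩

lemma fr_app_M' {b : MTerm} (hb : b ≠ MTerm.M) :
    fr (MTerm.app MTerm.M b) = [DTree.W (fr b)] := by
  cases b with
  | M => exact absurd rfl hb
  | var i => rfl
  | app x y => rfl

lemma fr_app_ne' {a : MTerm} (b : MTerm) (ha : a ≠ MTerm.M) :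
    fr (MTerm.app a b) = [DTree.B (fr a ++ fr b)] := by
  cases a with
  | M => exact absurd rfl ha
  | var i => rfl
  | app x y => rfl

lemma fr_app_MM' : fr (MTerm.app MTerm.M MTerm.M) = [DTree.B []] := rfl

lemma fr_app_single (a b : MTerm) : ∃ T, fr (MTerm.app a b) = [T] := by
  by_cases h : a = MTerm.M
  · subst h
    by_cases hb : b = MTerm.M
    · subst hb; exact ⟨_, rfl⟩
    · exact ⟨_, fr_app_M' hb⟩
  · exact ⟨_, fr_app_ne' b h⟩

lemma mle_src_atom {t u : MTerm} (h : MLe t u) (ht : ∀ x y, t ≠ MTerm.app x y) :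
    u = t := by
  induction h with
  | refl => rfl
  | tail h1 h2 ih =>
    rw [ih] at h2
    obtain ⟨x, y, hxy⟩ := step_src' h2
    exact absurd hxy (ht x y)

lemma mle_tgt_atom {t u : MTerm} (h : MLe t u) (hu : ∀ x y, u ≠ MTerm.app x y) :
    t = u := by
  rcases Relation.ReflTransGen.cases_tail h with h | ⟨c, _, hc⟩
  · exact h.symm
  · obtain ⟨x, y, hxy⟩ := step_tgt' hc
    exact absurd hxy (hu x y)

lemma mle_M' {t : MTerm} (h : MLe t MTerm.M) : t = MTerm.M :=
  mle_tgt_atom h (by simp)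

lemma mle_app' {a b u : MTerm} (h : MLe (MTerm.app a b) u) :
    ∃ x y, u = MTerm.app x y := by
  rcases Relation.ReflTransGen.cases_tail h with h | ⟨c, _, hc⟩
  · exact ⟨a, b, h⟩
  · exact step_tgt' hc

lemma mle_appMM {u : MTerm} (h : MLe (MTerm.app MTerm.M MTerm.M) u) :
    u = MTerm.app MTerm.M MTerm.M := by
  induction h with
  | refl => rfl
  | tail h1 h2 ih =>
    rw [ih] at h2
    cases h2 with
    | mock t => rfl
    | left t2 h => cases h
    | right t1 h => cases h

lemma mle_app_inv {a b u : MTerm} (h : MLe (MTerm.app a b) u) :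
    (∃ a' b', u = MTerm.app a' b' ∧ MLe a a' ∧ MLe b b') ∨
    (a = MTerm.M ∧ ∃ c, MLe b c ∧ MLe (MTerm.app c c) u) := by
  induction h with
  | refl => exact Or.inl ⟨a, b, rfl, Relation.ReflTransGen.refl, Relation.ReflTransGen.refl⟩
  | tail h1 h2 ih =>
    rcases ih with ⟨a1, b1, rfl, ha1, hb1⟩ | ⟨rfl, c0, hc0, hcc⟩
    · cases h2 with
      | mock t => exact Or.inr ⟨mle_M' ha1, b1, hb1, Relation.ReflTransGen.refl⟩
      | left t2 h => exact Or.inl ⟨_, _, rfl, Relation.ReflTransGen.tail ha1 h, hb1⟩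
      | right t1 h => exact Or.inl ⟨_, _, rfl, ha1, Relation.ReflTransGen.tail hb1 h⟩
    · exact Or.inr ⟨rfl, c0, hc0, Relation.ReflTransGen.tail hcc h2⟩

/-! ### DStep lemmas -/

lemma not_dstep_nil {f : List DTree} (h : DStep [] f) : False := by cases h

lemma dstep_append_left (f : List DTree) {g g' : List DTree} (h : DStep g g') :
    DStep (f ++ g) (f ++ g') := by
  induction f with
  | nil => exact h
  | cons t f ih => exact DStep.tail t ih

lemma dstep_cons_inv {t : DTree} {f h : List DTree} (hd : DStep (t :: f) h) :
    (∃ t', DStep [t] [t'] ∧ h = t' :: f) ∨ (∃ f', DStep f f' ∧ h = t :: f') := by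
  cases hd with
  | dup g => exact Or.inl ⟨_, DStep.dup g, rfl⟩
  | white h' => exact Or.inl ⟨_, DStep.white h', rfl⟩
  | black h' => exact Or.inl ⟨_, DStep.black h', rfl⟩
  | head f h' => exact Or.inl ⟨_, h', rfl⟩
  | tail t h' => exact Or.inr ⟨_, h', rfl⟩

lemma dstep_single_inv : ∀ {f f' : List DTree}, DStep f f' → ∀ {t : DTree}, f = [t] →
    ((∃ g, t = DTree.W g ∧ (f' = [DTree.B (g ++ g)] ∨ ∃ g', DStep g g' ∧ f' = [DTree.W g'])) ∨
     (∃ g g', t = DTree.B g ∧ DStep g g' ∧ f' = [DTree.B g'])) := by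
  intro f f' h
  induction h with
  | dup g =>
    rintro t ht
    injection ht with h1 _
    exact Or.inl ⟨g, h1.symm, Or.inl rfl⟩
  | white h' =>
    rintro t ht
    injection ht with h1 _
    exact Or.inl ⟨_, h1.symm, Or.inr ⟨_, h', rfl⟩⟩
  | black h' =>
    rintro t ht
    injection ht with h1 _
    exact Or.inr ⟨_, _, h1.symm, h', rfl⟩
  | head f0 h' ih =>
    rintro t ht
    injection ht with h1 h2
    subst h2
    exact h1 ▸ ih rfl
  | tail t0 h' ih =>
    rintro t ht
    injection ht with h1 h2
    subst h2
    exact absurd h' not_dstep_nil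

lemma dstep_W_inv {g f' : List DTree} (h : DStep [DTree.W g] f') :
    f' = [DTree.B (g ++ g)] ∨ ∃ g', DStep g g' ∧ f' = [DTree.W g'] := by
  rcases dstep_single_inv h rfl with ⟨g0, hg0, hrest⟩ | ⟨g0, g0', hg0, _⟩
  · injection hg0 with h1
    subst h1
    exact hrest
  · cases hg0

lemma dstep_B_inv {g f' : List DTree} (h : DStep [DTree.B g] f') :
    ∃ g', DStep g g' ∧ f' = [DTree.B g'] := by
  rcases dstep_single_inv h rfl with ⟨g0, hg0, _⟩ | ⟨g0, g0', hg0, hrest, hf'⟩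
  · cases hg0
  · injection hg0 with h1
    subst h1
    exact ⟨g0', hrest, hf'⟩

lemma dstep_append_inv : ∀ (f1 : List DTree) {f2 h : List DTree}, DStep (f1 ++ f2) h →
    (∃ f1', DStep f1 f1' ∧ h = f1' ++ f2) ∨ (∃ f2', DStep f2 f2' ∧ h = f1 ++ f2') := by
  intro f1
  induction f1 with
  | nil => intro f2 h hd; exact Or.inr ⟨h, hd, rfl⟩
  | cons t f1r ih =>
    intro f2 h hd
    rcases dstep_cons_inv hd with ⟨t', ht', rfl⟩ | ⟨f', hf', rfl⟩
    · exact Or.inl ⟨t' :: f1r, DStep.head _ ht', rfl⟩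
    · rcases ih hf' with ⟨f1', h1, rfl⟩ | ⟨f2', h2, rfl⟩
      · exact Or.inl ⟨t :: f1', DStep.tail _ h1, rfl⟩
      · exact Or.inr ⟨f2', h2, rfl⟩

/-! ### Forward direction -/

lemma step_forward {s s' : MTerm} (h : Step s s') : s ≠ s' → DStep (fr s) (fr s') := by
  induction h with
  | mock t =>
    intro hne
    have ht : t ≠ MTerm.M := by rintro rfl; exact hne rfl
    rw [fr_app_M' ht, fr_app_ne' t ht]
    exact DStep.dup (fr t)
  | @left t1 t1' t2 h ih =>
    intro hne
    have hne1 : t1 ≠ t1' := by rintro rfl; exact hne rfl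
    obtain ⟨x, y, rfl⟩ := step_src' h
    obtain ⟨x', y', rfl⟩ := step_tgt' h
    rw [fr_app_ne' t2 (by simp), fr_app_ne' t2 (by simp)]
    obtain ⟨T, hT⟩ := fr_app_single x y
    obtain ⟨T', hT'⟩ := fr_app_single x' y'
    have hd := ih hne1
    rw [hT, hT'] at hd
    rw [hT, hT']
    exact DStep.black (DStep.head _ hd)
  | @right t1 t2 t2' h ih =>
    intro hne
    have hne2 : t2 ≠ t2' := by rintro rfl; exact hne rfl
    obtain ⟨x, y, rfl⟩ := step_src' h
    obtain ⟨x', y', rfl⟩ := step_tgt' h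
    by_cases h1 : t1 = MTerm.M
    · subst h1
      rw [fr_app_M' (by simp), fr_app_M' (by simp)]
      exact DStep.white (ih hne2)
    · rw [fr_app_ne' _ h1, fr_app_ne' _ h1]
      exact DStep.black (dstep_append_left (fr t1) (ih hne2))

/-! ### Lifting -/

lemma dstep_lift : ∀ (s : MTerm) {f' : List DTree}, DStep (fr s) f' →
    ∃ s', Step s s' ∧ fr s' = f' := by
  intro s
  induction s with
  | M => intro f' h; exact absurd h not_dstep_nil
  | var i => intro f' h; exact absurd h not_dstep_nil
  | app a b iha ihb =>
    intro f' h
    by_cases ha : a = MTerm.M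
    · subst ha
      by_cases hb : b = MTerm.M
      · subst hb
        rw [fr_app_MM'] at h
        obtain ⟨g', hg', _⟩ := dstep_B_inv h
        exact absurd hg' not_dstep_nil
      · rw [fr_app_M' hb] at h
        rcases dstep_W_inv h with rfl | ⟨g', hg', rfl⟩
        · exact ⟨MTerm.app b b, Step.mock b, by rw [fr_app_ne' b hb]⟩
        · obtain ⟨b', hb', rfl⟩ := ihb hg'
          obtain ⟨x, y, hxy⟩ := step_tgt' hb'
          exact ⟨MTerm.app MTerm.M b', Step.right _ hb',
            by rw [fr_app_M' (by rw [hxy]; simp)]⟩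
    · rw [fr_app_ne' b ha] at h
      obtain ⟨g', hg', rfl⟩ := dstep_B_inv h
      rcases dstep_append_inv (fr a) hg' with ⟨fa', hfa, rfl⟩ | ⟨fb', hfb, rfl⟩
      · obtain ⟨a', ha', rfl⟩ := iha hfa
        obtain ⟨x, y, hxy⟩ := step_tgt' ha'
        exact ⟨MTerm.app a' b, Step.left _ ha',
          by rw [fr_app_ne' b (by rw [hxy]; simp)]⟩
      · obtain ⟨b', hb', rfl⟩ := ihb hfb
        exact ⟨MTerm.app a b', Step.right _ hb', by rw [fr_app_ne' b' ha]⟩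
/-! ### Injectivity of `fr` on up-sets -/

lemma fr_inj : ∀ (n : ℕ) (t s s' : MTerm), deg t + deg s + deg s' ≤ n →
    MLe t s → MLe t s' → fr s = fr s' → s = s' := by
  intro n
  induction n with
  | zero =>
    intro t s s' hdeg hs hs' _
    have hs0 : ∀ x y, s ≠ MTerm.app x y := by
      rintro x y rfl; simp [deg] at hdeg
    have hs'0 : ∀ x y, s' ≠ MTerm.app x y := by
      rintro x y rfl; simp [deg] at hdeg
    rw [← mle_tgt_atom hs hs0, ← mle_tgt_atom hs' hs'0]
  | succ n ih =>
    intro t s s' hdeg hs hs' hfr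
    cases t with
    | M => rw [mle_src_atom hs (by simp), mle_src_atom hs' (by simp)]
    | var i => rw [mle_src_atom hs (by simp), mle_src_atom hs' (by simp)]
    | app t1 t2 =>
      rcases mle_app_inv hs with ⟨a, b, rfl, ha, hb⟩ | ⟨rfl, c, hc, hcc⟩
      · rcases mle_app_inv hs' with ⟨a', b', rfl, ha', hb'⟩ | ⟨h1M, c', hc', hcc'⟩
        · -- LL case
          by_cases haM : a = MTerm.M
          · subst haM
            have ht1 : t1 = MTerm.M := mle_M' ha
            subst ht1
            have ha'M : a' = MTerm.M := mle_src_atom ha' (by simp)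
            subst ha'M
            by_cases hbM : b = MTerm.M
            · subst hbM
              by_cases hb'M : b' = MTerm.M
              · subst hb'M; rfl
              · rw [fr_app_MM', fr_app_M' hb'M] at hfr
                simp at hfr
            · by_cases hb'M : b' = MTerm.M
              · subst hb'M
                rw [fr_app_M' hbM, fr_app_MM'] at hfr
                simp at hfr
              · rw [fr_app_M' hbM, fr_app_M' hb'M] at hfr
                simp only [List.cons.injEq, DTree.W.injEq, and_true] at hfr
                have hdb : deg t2 + deg b + deg b' ≤ n := by
                  simp [deg] at hdeg; omega
                rw [ih t2 b b' hdb hb hb' hfr]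
          · have ha'M : a' ≠ MTerm.M := by
              intro h; subst h
              have ht1 : t1 = MTerm.M := mle_M' ha'
              subst ht1
              exact haM (mle_src_atom ha (by simp))
            rw [fr_app_ne' b haM, fr_app_ne' b' ha'M] at hfr
            simp only [List.cons.injEq, DTree.B.injEq, and_true] at hfr
            cases t1 with
            | M => exact absurd (mle_src_atom ha (by simp)) haM
            | var i =>
              have h1 : a = MTerm.var i := mle_src_atom ha (by simp)
              have h2 : a' = MTerm.var i := mle_src_atom ha' (by simp)
              subst h1; subst h2
              simp only [fr, List.nil_append] at hfr
              have hdb : deg t2 + deg b + deg b' ≤ n := by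
                simp [deg] at hdeg; omega
              rw [ih t2 b b' hdb hb hb' hfr]
            | app u v =>
              obtain ⟨x, y, hxy⟩ := mle_app' ha
              obtain ⟨x', y', hxy'⟩ := mle_app' ha'
              obtain ⟨T, hT⟩ := fr_app_single x y
              obtain ⟨T', hT'⟩ := fr_app_single x' y'
              rw [hxy, hT, hxy', hT'] at hfr
              simp only [List.cons_append, List.nil_append, List.cons.injEq] at hfr
              have hfra : fr a = fr a' := by rw [hxy, hT, hxy', hT', hfr.1]
              have hda : deg (MTerm.app u v) + deg a + deg a' ≤ n := by
                simp [deg] at hdeg ⊢; omega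
              have hdb : deg t2 + deg b + deg b' ≤ n := by
                simp [deg] at hdeg; omega
              rw [ih _ a a' hda ha ha' hfra, ih t2 b b' hdb hb hb' hfr.2]
        · -- LR case
          subst h1M
          have haM : a = MTerm.M := mle_src_atom ha (by simp)
          subst haM
          by_cases hbM : b = MTerm.M
          · subst hbM
            have ht2 : t2 = MTerm.M := mle_M' hb
            subst ht2
            exact (mle_appMM hs').symm
          · have hcM : c' ≠ MTerm.M := by
              intro h; subst h
              have ht2 : t2 = MTerm.M := mle_M' hc'
              subst ht2
              exact hbM (mle_src_atom hb (by simp))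
            rcases mle_app_inv hcc' with ⟨a', b', rfl, hca', hcb'⟩ | ⟨hc'M, _⟩
            · have ha'M : a' ≠ MTerm.M := by
                intro h; subst h; exact hcM (mle_M' hca')
              rw [fr_app_M' hbM, fr_app_ne' b' ha'M] at hfr
              simp at hfr
            · exact absurd hc'M hcM
      · rcases mle_app_inv hs' with ⟨a', b', rfl, ha', hb'⟩ | ⟨_, c', hc', hcc'⟩
        · -- RL case (mirror of LR)
          have ha'M : a' = MTerm.M := mle_src_atom ha' (by simp)
          subst ha'M
          by_cases hb'M : b' = MTerm.M
          · subst hb'M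
            have ht2 : t2 = MTerm.M := mle_M' hb'
            subst ht2
            exact mle_appMM hs
          · have hcM : c ≠ MTerm.M := by
              intro h; subst h
              have ht2 : t2 = MTerm.M := mle_M' hc
              subst ht2
              exact hb'M (mle_src_atom hb' (by simp))
            rcases mle_app_inv hcc with ⟨a0, b0, rfl, hca, hcb⟩ | ⟨hcM', _⟩
            · have ha0M : a0 ≠ MTerm.M := by
                intro h; subst h; exact hcM (mle_M' hca)
              rw [fr_app_M' hb'M, fr_app_ne' b0 ha0M] at hfr
              simp at hfr
            · exact absurd hcM' hcM
        · -- RR case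
          by_cases ht2 : t2 = MTerm.M
          · subst ht2
            rw [mle_appMM hs, mle_appMM hs']
          · have hcM : c ≠ MTerm.M := by
              intro h; subst h; exact ht2 (mle_M' hc)
            have hc'M : c' ≠ MTerm.M := by
              intro h; subst h; exact ht2 (mle_M' hc')
            rcases mle_app_inv hcc with ⟨a0, b0, rfl, hca, hcb⟩ | ⟨hcM', _⟩
            · rcases mle_app_inv hcc' with ⟨a1, b1, rfl, hca', hcb'⟩ | ⟨hc'M', _⟩
              · have ha0 : MLe t2 a0 := Relation.ReflTransGen.trans hc hca
                have hb0 : MLe t2 b0 := Relation.ReflTransGen.trans hc hcb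
                have ha1 : MLe t2 a1 := Relation.ReflTransGen.trans hc' hca'
                have hb1 : MLe t2 b1 := Relation.ReflTransGen.trans hc' hcb'
                have ha0M : a0 ≠ MTerm.M := by
                  intro h; subst h; exact hcM (mle_M' hca)
                have ha1M : a1 ≠ MTerm.M := by
                  intro h; subst h; exact hc'M (mle_M' hca')
                rw [fr_app_ne' b0 ha0M, fr_app_ne' b1 ha1M] at hfr
                simp only [List.cons.injEq, DTree.B.injEq, and_true] at hfr
                cases t2 with
                | M => exact absurd rfl ht2
                | var i =>
                  rw [mle_src_atom ha0 (by simp), mle_src_atom hb0 (by simp),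
                      mle_src_atom ha1 (by simp), mle_src_atom hb1 (by simp)]
                | app u v =>
                  obtain ⟨x, y, hxy⟩ := mle_app' ha0
                  obtain ⟨x0, y0, hxy0⟩ := mle_app' hb0
                  obtain ⟨x1, y1, hxy1⟩ := mle_app' ha1
                  obtain ⟨x2, y2, hxy2⟩ := mle_app' hb1
                  obtain ⟨T, hT⟩ := fr_app_single x y
                  obtain ⟨T0, hT0⟩ := fr_app_single x0 y0
                  obtain ⟨T1, hT1⟩ := fr_app_single x1 y1
                  obtain ⟨T2, hT2⟩ := fr_app_single x2 y2
                  rw [hxy, hT, hxy0, hT0, hxy1, hT1, hxy2, hT2] at hfr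
                  simp only [List.cons_append, List.nil_append, List.cons.injEq] at hfr
                  have hfra : fr a0 = fr a1 := by rw [hxy, hT, hxy1, hT1, hfr.1]
                  have hfrb : fr b0 = fr b1 := by
                    rw [hxy0, hT0, hxy2, hT2, hfr.2.1]
                  have hda : deg (MTerm.app u v) + deg a0 + deg a1 ≤ n := by
                    simp [deg] at hdeg ⊢; omega
                  have hdb : deg (MTerm.app u v) + deg b0 + deg b1 ≤ n := by
                    simp [deg] at hdeg ⊢; omega
                  rw [ih _ a0 a1 hda ha0 ha1 hfra, ih _ b0 b1 hdb hb0 hb1 hfrb]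
              · exact absurd hc'M' hc'M
            · exact absurd hcM' hcM
/-- for `s, s'` above `t` with `s ≠ s'`, one has `s ⇒ s'` iff
`fr s ⋖ fr s'`. -/
theorem step_iff_dstep (t s s' : MTerm)
    (hs : MLe t s) (hs' : MLe t s') (hne : s ≠ s') :
    Step s s' ↔ DStep (fr s) (fr s') := by
  constructor
  · exact fun h => step_forward h hne
  · intro h
    obtain ⟨s'', hstep, hfr⟩ := dstep_lift s h
    have hts'' : MLe t s'' := Relation.ReflTransGen.tail hs hstep
    have he : s'' = s' :=
      fr_inj (deg t + deg s'' + deg s') t s'' s' le_rfl hts'' hs' hfr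
    rwa [he] at hstep
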